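/- Let 0 ≤ θ₁ < θ₂ < θ₃ < θ₄ < θ₅ < θ₆ < 2π and for each i let pᵢ = (cos θᵢ, sin θᵢ) ∈ ℝ². Then the interior of the convex hull of {p₁, p₃, p₅} and the interior of the convex hull of {p₂, p₄, p₆} have a common point. -/

import Mathlib

open Real Set

/-- A quadratic with nonzero leading coefficient cannot have three distinct roots. -/
private lemma quad_three_roots {A B C t₁ t₂ t₃ : ℝ} (hA : A ≠ 0)
    (h12 : t₁ ≠ t₂) (h13 : t₁ ≠ t₃) (h23 : t₂ ≠ t₃)
    (e1 : A * t₁ ^ 2 + B * t₁ + C = 0) (e2 : A * t₂ ^ 2 + B * t₂ + C = 0)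
    (e3 : A * t₃ ^ 2 + B * t₃ + C = 0) : False := by
  have k12 : (t₁ - t₂) * (A * (t₁ + t₂) + B) = 0 := by linear_combination e1 - e2
  have k13 : (t₁ - t₃) * (A * (t₁ + t₃) + B) = 0 := by linear_combination e1 - e3
  have l12 : A * (t₁ + t₂) + B = 0 :=
    (mul_eq_zero.1 k12).resolve_left (sub_ne_zero.2 h12)
  have l13 : A * (t₁ + t₃) + B = 0 :=
    (mul_eq_zero.1 k13).resolve_left (sub_ne_zero.2 h13)
  have : A * (t₂ - t₃) = 0 := by linear_combination l12 - l13
  rcases mul_eq_zero.1 this with h | h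
  · exact hA h
  · exact h23 (sub_eq_zero.1 h)

/-- A line meets the unit circle in at most two points. -/
private lemma line_circle {a b c : ℝ} (hab : a ≠ 0 ∨ b ≠ 0) {p q r : ℝ × ℝ}
    (hp : p.1 ^ 2 + p.2 ^ 2 = 1) (hq : q.1 ^ 2 + q.2 ^ 2 = 1) (hr : r.1 ^ 2 + r.2 ^ 2 = 1)
    (lp : a * p.1 + b * p.2 = c) (lq : a * q.1 + b * q.2 = c) (lr : a * r.1 + b * r.2 = c)
    (hpq : p ≠ q) (hpr : p ≠ r) (hqr : q ≠ r) : False := by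
  rcases hab with ha | hb
  · -- use `y` coordinates as the roots
    have key : ∀ u v : ℝ × ℝ, u.1 ^ 2 + u.2 ^ 2 = 1 → a * u.1 + b * u.2 = c →
        v.1 ^ 2 + v.2 ^ 2 = 1 → a * v.1 + b * v.2 = c → u ≠ v → u.2 ≠ v.2 := by
      intro u v hu lu hv lv huv h2
      apply huv
      have h1 : a * u.1 = a * v.1 := by rw [← h2] at lv; linarith
      exact Prod.ext (mul_left_cancel₀ ha h1) h2
    refine quad_three_roots (A := a ^ 2 + b ^ 2) (B := -2 * b * c) (C := c ^ 2 - a ^ 2)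
      (by positivity) (key p q hp lp hq lq hpq) (key p r hp lp hr lr hpr)
      (key q r hq lq hr lr hqr) ?_ ?_ ?_
    · linear_combination a ^ 2 * hp - (a * p.1 - b * p.2 + c) * lp
    · linear_combination a ^ 2 * hq - (a * q.1 - b * q.2 + c) * lq
    · linear_combination a ^ 2 * hr - (a * r.1 - b * r.2 + c) * lr
  · -- use `x` coordinates as the roots
    have key : ∀ u v : ℝ × ℝ, u.1 ^ 2 + u.2 ^ 2 = 1 → a * u.1 + b * u.2 = c →
        v.1 ^ 2 + v.2 ^ 2 = 1 → a * v.1 + b * v.2 = c → u ≠ v → u.1 ≠ v.1 := by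
      intro u v hu lu hv lv huv h1
      apply huv
      have h2 : b * u.2 = b * v.2 := by rw [← h1] at lv; linarith
      exact Prod.ext h1 (mul_left_cancel₀ hb h2)
    refine quad_three_roots (A := a ^ 2 + b ^ 2) (B := -2 * a * c) (C := c ^ 2 - b ^ 2)
      (by positivity) (key p q hp lp hq lq hpq) (key p r hp lp hr lr hpr)
      (key q r hq lq hr lr hqr) ?_ ?_ ?_
    · linear_combination b ^ 2 * hp - (b * p.2 - a * p.1 + c) * lp
    · linear_combination b ^ 2 * hq - (b * q.2 - a * q.1 + c) * lq
    · linear_combination b ^ 2 * hr - (b * r.2 - a * r.1 + c) * lr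

/-- The parameterization of the circle is injective on `[0, 2π)`. -/
private lemma circle_inj {x y : ℝ} (hx0 : 0 ≤ x) (hx2 : x < 2 * π)
    (hy0 : 0 ≤ y) (hy2 : y < 2 * π) (hc : Real.cos x = Real.cos y)
    (hs : Real.sin x = Real.sin y) : x = y := by
  have h1 : Real.cos (x - y) = 1 := by
    rw [Real.cos_sub, hc, hs]
    exact (Real.sin_sq_add_cos_sq y) ▸ by ring
  have h2 : x - y = 0 := by
    rw [← Real.cos_eq_one_iff_of_lt_of_lt (by linarith) (by linarith)]
    exact h1
  linarith

/-- Three distinct points on the unit circle are not collinear. -/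
private lemma not_collinear_circle {p q r : ℝ × ℝ}
    (hp : p.1 ^ 2 + p.2 ^ 2 = 1) (hq : q.1 ^ 2 + q.2 ^ 2 = 1) (hr : r.1 ^ 2 + r.2 ^ 2 = 1)
    (hpq : p ≠ q) (hpr : p ≠ r) (hqr : q ≠ r) :
    ¬ Collinear ℝ ({p, q, r} : Set (ℝ × ℝ)) := by
  intro hcol
  rw [collinear_iff_of_mem (Set.mem_insert p _)] at hcol
  obtain ⟨v, hv⟩ := hcol
  obtain ⟨t₂, ht₂⟩ := hv q (by simp)
  obtain ⟨t₃, ht₃⟩ := hv r (by simp)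
  have hvne : v ≠ 0 := by
    rintro rfl
    simp only [smul_zero, zero_vadd] at ht₂
    exact hpq ht₂.symm
  have hA : v.1 ^ 2 + v.2 ^ 2 ≠ 0 := by
    intro h
    apply hvne
    have h1 : v.1 = 0 := by nlinarith [sq_nonneg v.1, sq_nonneg v.2]
    have h2 : v.2 = 0 := by nlinarith [sq_nonneg v.1, sq_nonneg v.2]
    exact Prod.ext h1 h2
  have hq1 : q.1 = t₂ * v.1 + p.1 := by rw [ht₂]; rfl
  have hq2 : q.2 = t₂ * v.2 + p.2 := by rw [ht₂]; rfl
  have hr1 : r.1 = t₃ * v.1 + p.1 := by rw [ht₃]; rfl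
  have hr2 : r.2 = t₃ * v.2 + p.2 := by rw [ht₃]; rfl
  have h02 : (0 : ℝ) ≠ t₂ := by
    rintro rfl
    exact hpq (by rw [ht₂, zero_smul, zero_vadd])
  have h03 : (0 : ℝ) ≠ t₃ := by
    rintro rfl
    exact hpr (by rw [ht₃, zero_smul, zero_vadd])
  have h23 : t₂ ≠ t₃ := by
    rintro rfl
    exact hqr (by rw [ht₂, ht₃])
  refine quad_three_roots (A := v.1 ^ 2 + v.2 ^ 2) (B := 2 * (v.1 * p.1 + v.2 * p.2))
    (C := p.1 ^ 2 + p.2 ^ 2 - 1) hA h02 h03 h23 (by linear_combination hp) ?_ ?_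
  · linear_combination hq - (t₂ * v.1 + p.1 + q.1) * hq1 - (t₂ * v.2 + p.2 + q.2) * hq2
  · linear_combination hr - (t₃ * v.1 + p.1 + r.1) * hr1 - (t₃ * v.2 + p.2 + r.2) * hr2

/-- A vertex of a convex set on which a linear functional is `< c` on the interior
satisfies `f p ≤ c`. -/
private lemma vertex_le {s : Set (ℝ × ℝ)} (hconv : Convex ℝ s)
    {f : (ℝ × ℝ) →L[ℝ] ℝ} {c : ℝ} (h : ∀ y ∈ interior s, f y < c)
    {p x : ℝ × ℝ} (hp : p ∈ s) (hx : x ∈ interior s) : f p ≤ c := by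
  by_contra hgt
  push_neg at hgt
  have hfx : f x < c := h x hx
  have hd : (0 : ℝ) < f p - f x := by linarith
  set t : ℝ := (f p - c) / (f p - f x) with ht
  have ht0 : 0 < t := div_pos (by linarith) hd
  have ht1 : t ≤ 1 := by
    rw [div_le_one hd]; linarith
  have hmem : p + t • (x - p) ∈ interior s :=
    hconv.add_smul_sub_mem_interior hp hx ⟨ht0, ht1⟩
  have := h _ hmem
  rw [map_add, map_smul, map_sub, smul_eq_mul] at this
  have heq : t * (f x - f p) = -(f p - c) := by
    rw [ht]; field_simp; ring
  linarith [heq ▸ this]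

set_option maxHeartbeats 1000000 in
theorem alternating_arcs_intersecting_interiors (θ₁ θ₂ θ₃ θ₄ θ₅ θ₆ : ℝ)
    (h0 : 0 ≤ θ₁) (h12 : θ₁ < θ₂) (h23 : θ₂ < θ₃) (h34 : θ₃ < θ₄)
    (h45 : θ₄ < θ₅) (h56 : θ₅ < θ₆) (h6 : θ₆ < 2 * Real.pi) :
    (interior (convexHull ℝ
        ({(Real.cos θ₁, Real.sin θ₁), (Real.cos θ₃, Real.sin θ₃),
          (Real.cos θ₅, Real.sin θ₅)} : Set (ℝ × ℝ))) ∩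
      interior (convexHull ℝ
        ({(Real.cos θ₂, Real.sin θ₂), (Real.cos θ₄, Real.sin θ₄),
          (Real.cos θ₆, Real.sin θ₆)} : Set (ℝ × ℝ)))).Nonempty := by
  -- notation for the six points
  set P : ℝ → ℝ × ℝ := fun θ => (Real.cos θ, Real.sin θ) with hP
  have hcirc : ∀ θ : ℝ, (P θ).1 ^ 2 + (P θ).2 ^ 2 = 1 := fun θ => by
    simpa [hP] using Real.cos_sq_add_sin_sq θ
  have hinj : ∀ x y : ℝ, 0 ≤ x → x < 2 * π → 0 ≤ y → y < 2 * π → x ≠ y → P x ≠ P y := by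
    intro x y hx0 hx2 hy0 hy2 hne heq
    exact hne (circle_inj hx0 hx2 hy0 hy2 (congrArg Prod.fst heq) (congrArg Prod.snd heq))
  -- ranges of angles
  have r1 : 0 ≤ θ₁ ∧ θ₁ < 2 * π := ⟨h0, by linarith⟩
  have r2 : 0 ≤ θ₂ ∧ θ₂ < 2 * π := ⟨by linarith, by linarith⟩
  have r3 : 0 ≤ θ₃ ∧ θ₃ < 2 * π := ⟨by linarith, by linarith⟩
  have r4 : 0 ≤ θ₄ ∧ θ₄ < 2 * π := ⟨by linarith, by linarith⟩
  have r5 : 0 ≤ θ₅ ∧ θ₅ < 2 * π := ⟨by linarith, by linarith⟩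
  have r6 : 0 ≤ θ₆ ∧ θ₆ < 2 * π := ⟨by linarith, by linarith⟩
  -- the two hulls
  set S₁ : Set (ℝ × ℝ) := {P θ₁, P θ₃, P θ₅} with hS₁
  set S₂ : Set (ℝ × ℝ) := {P θ₂, P θ₄, P θ₆} with hS₂
  have hint : ∀ (α β γ : ℝ), 0 ≤ α → α < β → β < γ → γ < 2 * π →
      (interior (convexHull ℝ ({P α, P β, P γ} : Set (ℝ × ℝ)))).Nonempty := by
    intro α β γ hα hαβ hβγ hγ
    have hd1 : P α ≠ P β := hinj _ _ hα (by linarith) (by linarith) (by linarith) hαβ.ne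
    have hd2 : P α ≠ P γ := hinj _ _ hα (by linarith) (by linarith) hγ (by linarith)
    have hd3 : P β ≠ P γ := hinj _ _ (by linarith) (by linarith) (by linarith) hγ hβγ.ne
    have hncol := not_collinear_circle (hcirc α) (hcirc β) (hcirc γ) hd1 hd2 hd3
    have hai : AffineIndependent ℝ ![P α, P β, P γ] :=
      affineIndependent_iff_not_collinear_set.2 hncol
    have hspan : affineSpan ℝ (Set.range ![P α, P β, P γ]) = ⊤ := by
      rw [hai.affineSpan_eq_top_iff_card_eq_finrank_add_one]
      simp
    have hrange : Set.range ![P α, P β, P γ] = {P α, P β, P γ} := by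
      simp_rw [Matrix.range_cons, Matrix.range_empty, Set.singleton_union,
        insert_empty_eq]
    rw [hrange] at hspan
    rw [(convex_convexHull ℝ _).interior_nonempty_iff_affineSpan_eq_top,
      affineSpan_convexHull]
    exact hspan
  obtain ⟨x₀, hx₀⟩ := hint θ₁ θ₃ θ₅ h0 (by linarith) (by linarith) (by linarith)
  obtain ⟨y₀, hy₀⟩ := hint θ₂ θ₄ θ₆ (by linarith) (by linarith) (by linarith) h6
  -- suppose the interiors are disjoint
  by_contra hcon
  rw [Set.not_nonempty_iff_eq_empty] at hcon
  have hdisj : Disjoint (interior (convexHull ℝ S₁)) (interior (convexHull ℝ S₂)) :=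
    Set.disjoint_iff_inter_eq_empty.2 hcon
  obtain ⟨f, c, hfc₁, hfc₂⟩ := geometric_hahn_banach_open_open
    ((convex_convexHull ℝ S₁).interior) isOpen_interior
    ((convex_convexHull ℝ S₂).interior) isOpen_interior hdisj
  set a : ℝ := f (1, 0) with ha
  set b : ℝ := f (0, 1) with hb
  have hf : ∀ w : ℝ × ℝ, f w = a * w.1 + b * w.2 := by
    intro w
    have h1 : f w = f (w.1 • ((1 : ℝ), (0 : ℝ)) + w.2 • ((0 : ℝ), (1 : ℝ))) := by
      congr 1
      ext <;> simp
    rw [h1, map_add, map_smul, map_smul, smul_eq_mul, smul_eq_mul, ← ha, ← hb]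
    ring
  -- f is bounded by c on the first hull's vertices, ≥ c on the second's
  have hle : ∀ w ∈ S₁, f w ≤ c :=
    fun w hw => vertex_le (convex_convexHull ℝ S₁) hfc₁ (subset_convexHull ℝ S₁ hw) hx₀
  have hge : ∀ w ∈ S₂, c ≤ f w := by
    intro w hw
    have h' : ∀ y ∈ interior (convexHull ℝ S₂), (-f) y < -c := by
      intro y hy
      simp only [ContinuousLinearMap.neg_apply, neg_lt_neg_iff]
      exact hfc₂ y hy
    have := vertex_le (convex_convexHull ℝ S₂) h' (subset_convexHull ℝ S₂ hw) hy₀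
    simp only [ContinuousLinearMap.neg_apply, neg_le_neg_iff] at this
    linarith
  -- the function g
  set g : ℝ → ℝ := fun θ => a * Real.cos θ + b * Real.sin θ - c with hg
  have hgc : Continuous g := by fun_prop
  have hgP : ∀ θ : ℝ, g θ = f (P θ) - c := fun θ => by rw [hf]
  have g1 : g θ₁ ≤ 0 := by rw [hgP]; have := hle (P θ₁) (by simp [hS₁]); linarith
  have g3 : g θ₃ ≤ 0 := by rw [hgP]; have := hle (P θ₃) (by simp [hS₁]); linarith
  have g5 : g θ₅ ≤ 0 := by rw [hgP]; have := hle (P θ₅) (by simp [hS₁]); linarith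
  have g2 : 0 ≤ g θ₂ := by rw [hgP]; have := hge (P θ₂) (by simp [hS₂]); linarith
  have g4 : 0 ≤ g θ₄ := by rw [hgP]; have := hge (P θ₄) (by simp [hS₂]); linarith
  have g6 : 0 ≤ g θ₆ := by rw [hgP]; have := hge (P θ₆) (by simp [hS₂]); linarith
  -- three distinct zeros of g via IVT
  have ivt : ∀ α β : ℝ, α ≤ β → g α ≤ 0 → 0 ≤ g β → ∃ z ∈ Icc α β, g z = 0 := by
    intro α β hab hga hgb
    have := intermediate_value_Icc hab hgc.continuousOn (a := α) (b := β)
    obtain ⟨z, hz, hz0⟩ := this ⟨hga, hgb⟩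
    exact ⟨z, hz, hz0⟩
  obtain ⟨z₁, hz₁, hz₁0⟩ := ivt θ₁ θ₂ h12.le g1 g2
  obtain ⟨z₂, hz₂, hz₂0⟩ := ivt θ₃ θ₄ h34.le g3 g4
  obtain ⟨z₃, hz₃, hz₃0⟩ := ivt θ₅ θ₆ h56.le g5 g6
  -- a, b not both zero
  have hab : a ≠ 0 ∨ b ≠ 0 := by
    by_contra hc'
    push_neg at hc'
    have h1 := hfc₁ x₀ hx₀
    have h2 := hfc₂ y₀ hy₀
    rw [hf] at h1 h2
    rw [hc'.1, hc'.2] at h1 h2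
    simp at h1 h2
    linarith
  -- ranges of the zeros
  have hz₁r : 0 ≤ z₁ ∧ z₁ < 2 * π := ⟨le_trans h0 hz₁.1, by linarith [hz₁.2]⟩
  have hz₂r : 0 ≤ z₂ ∧ z₂ < 2 * π := ⟨by linarith [hz₂.1], by linarith [hz₂.2]⟩
  have hz₃r : 0 ≤ z₃ ∧ z₃ < 2 * π := ⟨by linarith [hz₃.1], by linarith [hz₃.2]⟩
  have hz12 : z₁ ≠ z₂ := by
    have : z₁ < z₂ := by linarith [hz₁.2, hz₂.1]
    exact this.ne
  have hz13 : z₁ ≠ z₃ := by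
    have : z₁ < z₃ := by linarith [hz₁.2, hz₃.1]
    exact this.ne
  have hz23 : z₂ ≠ z₃ := by
    have : z₂ < z₃ := by linarith [hz₂.2, hz₃.1]
    exact this.ne
  -- contradiction: three distinct points on line ∩ circle
  refine line_circle (c := c) hab (hcirc z₁) (hcirc z₂) (hcirc z₃) ?_ ?_ ?_
    (hinj _ _ hz₁r.1 hz₁r.2 hz₂r.1 hz₂r.2 hz12)
    (hinj _ _ hz₁r.1 hz₁r.2 hz₃r.1 hz₃r.2 hz13)
    (hinj _ _ hz₂r.1 hz₂r.2 hz₃r.1 hz₃r.2 hz23)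
  · show a * Real.cos z₁ + b * Real.sin z₁ = c
    have := hz₁0; simp only [hg] at this; linarith
  · show a * Real.cos z₂ + b * Real.sin z₂ = c
    have := hz₂0; simp only [hg] at this; linarith
  · show a * Real.cos z₃ + b * Real.sin z₃ = c
    have := hz₃0; simp only [hg] at this; linarith
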